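/- The set of all values of the series ∑_{n=1}^∞ 1/∏_{i=1}^{f(n)} (n+i), as (f(n))_{n=1}^∞ ranges over all (weakly) increasing sequences of positive integers with lim_{n→∞} f(n) = ∞, has Lebesgue measure zero (as a subset of ℝ). -/

import Mathlib

open Filter MeasureTheory Finset
open scoped ENNReal NNReal

namespace Stmt2Aux

noncomputable def F (m k : ℕ) : ℝ := (Nat.factorial m : ℝ) / (Nat.factorial (m + k) : ℝ)

lemma F_pos (m k : ℕ) : 0 < F m k := by
  unfold F
  positivity

lemma F_nonneg (m k : ℕ) : 0 ≤ F m k := (F_pos m k).le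

lemma F_anti (m : ℕ) {k k' : ℕ} (h : k ≤ k') : F m k' ≤ F m k := by
  unfold F
  apply div_le_div_of_nonneg_left (by positivity) (by positivity)
  exact_mod_cast Nat.factorial_le (by omega)

lemma prod_eq (m k : ℕ) : m.factorial * ∏ i ∈ Icc 1 k, (m + i) = (m + k).factorial := by
  induction k with
  | zero => simp
  | succ k ih =>
    rw [Finset.prod_Icc_succ_top (by omega : 1 ≤ k + 1), ← Nat.mul_assoc, ih]
    rw [show m + (k + 1) = (m + k) + 1 from by omega, Nat.factorial_succ]
    ring

lemma term_eq (f : ℕ → ℕ) (n : ℕ) :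
    (1 : ℝ) / ((∏ i ∈ Finset.Icc 1 (f (n + 1)), (n + 1 + i) : ℕ) : ℝ)
      = F (n + 1) (f (n + 1)) := by
  have h := prod_eq (n + 1) (f (n + 1))
  have h2 : ((n + 1).factorial : ℝ) * ((∏ i ∈ Finset.Icc 1 (f (n + 1)), (n + 1 + i) : ℕ) : ℝ)
      = ((n + 1 + f (n + 1)).factorial : ℝ) := by exact_mod_cast congrArg (Nat.cast (R := ℝ)) h
  unfold F
  have hf : ((n + 1).factorial : ℝ) ≠ 0 := by positivity
  have hP : ((∏ i ∈ Finset.Icc 1 (f (n + 1)), (n + 1 + i) : ℕ) : ℝ)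
      = ((n + 1 + f (n + 1)).factorial : ℝ) / ((n + 1).factorial : ℝ) := by
    rw [eq_div_iff hf]
    linarith [h2]
  rw [hP, one_div, inv_div]


lemma tele (R j : ℕ) :
    HasSum (fun n : ℕ => F (n + R + 1) (j + 2))
      (((R + 1).factorial : ℝ) / ((j + 1) * ((R + j + 2).factorial : ℝ))) := by
  set b : ℕ → ℝ := fun n => ((n + R + 1).factorial : ℝ) / ((n + R + j + 2).factorial : ℝ)
    with hb
  have hbnn : ∀ n, 0 ≤ b n := fun n => by rw [hb]; positivity
  have hterm : ∀ n : ℕ, b n - b (n + 1) = (j + 1) * F (n + R + 1) (j + 2) := by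
    intro n
    simp only [hb]
    unfold F
    have e1 : n + 1 + R + 1 = n + R + 2 := by omega
    have e2 : n + 1 + R + j + 2 = n + R + j + 3 := by omega
    have e3 : n + R + 1 + (j + 2) = n + R + j + 3 := by omega
    have f1 : ((n + R + j + 3).factorial : ℝ)
        = ((n + R + j + 3 : ℕ) : ℝ) * ((n + R + j + 2).factorial : ℝ) := by
      rw [show n + R + j + 3 = (n + R + j + 2) + 1 from rfl, Nat.factorial_succ]
      push_cast
      ring
    have f2 : ((n + R + 2).factorial : ℝ)
        = ((n + R + 2 : ℕ) : ℝ) * ((n + R + 1).factorial : ℝ) := by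
      rw [show n + R + 2 = (n + R + 1) + 1 from rfl, Nat.factorial_succ]
      push_cast
      ring
    rw [e1, e2, e3, f1, f2]
    have p1 : ((n + R + j + 2).factorial : ℝ) ≠ 0 := by positivity
    push_cast
    have p3 : ((n:ℝ) + R + j + 3) ≠ 0 := by positivity
    field_simp
    ring
  have hble : ∀ n : ℕ, b n ≤ 1 / (n + 1 : ℝ) := by
    intro n
    simp only [hb]
    rw [div_le_div_iff₀ (by positivity) (by positivity)]
    have h1 : (n + R + 1).factorial * (n + 1) ≤ (n + R + 2).factorial := by
      have e : (n + R + 2).factorial = (n + R + 2) * (n + R + 1).factorial :=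
        Nat.factorial_succ (n + R + 1)
      rw [e, Nat.mul_comm ((n + R + 1).factorial)]
      exact Nat.mul_le_mul_right _ (by omega)
    have h2 : (n + R + 2).factorial ≤ (n + R + j + 2).factorial :=
      Nat.factorial_le (by omega)
    calc ((n + R + 1).factorial : ℝ) * (n + 1)
        = (((n + R + 1).factorial * (n + 1) : ℕ) : ℝ) := by push_cast; ring
      _ ≤ (((n + R + j + 2).factorial : ℕ) : ℝ) := by exact_mod_cast le_trans h1 h2
      _ = 1 * ((n + R + j + 2).factorial : ℝ) := by ring
  have hbtend : Tendsto b atTop (nhds 0) := by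
    apply squeeze_zero hbnn hble
    exact tendsto_one_div_add_atTop_nhds_zero_nat
  have hg : ∀ n, 0 ≤ b n - b (n + 1) := by
    intro n
    rw [hterm n]
    exact mul_nonneg (by positivity) (F_nonneg _ _)
  have hps : ∀ n : ℕ, ∑ i ∈ Finset.range n, (b i - b (i + 1)) = b 0 - b n :=
    fun n => Finset.sum_range_sub' b n
  have hsummable : Summable (fun n => b n - b (n + 1)) := by
    apply summable_of_sum_range_le hg
    intro n
    rw [hps n]
    have := hbnn n
    linarith
  have hsum : HasSum (fun n => b n - b (n + 1)) (b 0) := by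
    have h1 := hsummable.hasSum
    have h2 := h1.tendsto_sum_nat
    have h3 : Tendsto (fun n => ∑ i ∈ Finset.range n, (b i - b (i + 1))) atTop
        (nhds (b 0 - 0)) := by
      simp_rw [hps]
      exact tendsto_const_nhds.sub hbtend
    rw [sub_zero] at h3
    rwa [tendsto_nhds_unique h2 h3] at h1
  have := hsum.div_const ((j : ℝ) + 1)
  have heq : (fun n => (b n - b (n + 1)) / ((j : ℝ) + 1)) = fun n => F (n + R + 1) (j + 2) := by
    funext n
    rw [hterm n]
    field_simp
  rw [heq] at this
  have hb0 : b 0 = ((R + 1).factorial : ℝ) / ((R + j + 2).factorial : ℝ) := by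
    simp only [hb]
    norm_num
  rw [hb0] at this
  convert this using 1
  · rfl
  · rw [div_div, mul_comm]


lemma count_bound (R j : ℕ) :
    ((R + j + 1).choose R : ℝ) *
        (((R + 1).factorial : ℝ) / ((j + 1) * ((R + j + 2).factorial : ℝ)))
      ≤ 1 / ((j + 1).factorial : ℝ) := by
  have hnat : (R + j + 1).choose R * (R + 1).factorial * (j + 1).factorial
      ≤ (j + 1) * (R + j + 2).factorial := by
    have h := Nat.choose_mul_factorial_mul_factorial (show R ≤ R + j + 1 by omega)
    have e : R + j + 1 - R = j + 1 := by omega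
    rw [e] at h
    have e2 : (R + j + 1).choose R * (R + 1).factorial * (j + 1).factorial
        = (R + 1) * ((R + j + 1).choose R * R.factorial * (j + 1).factorial) := by
      rw [Nat.factorial_succ]
      ring
    rw [e2, h]
    calc (R + 1) * (R + j + 1).factorial
        ≤ (R + j + 2) * (R + j + 1).factorial := Nat.mul_le_mul_right _ (by omega)
      _ = (R + j + 2).factorial := (Nat.factorial_succ _).symm
      _ ≤ (j + 1) * (R + j + 2).factorial := Nat.le_mul_of_pos_left _ (by omega)
  rw [mul_div_assoc']
  rw [div_le_div_iff₀ (by positivity) (by positivity)]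
  rw [one_mul]
  exact_mod_cast hnat


lemma B_bound (R m : ℕ) :
    MeasureTheory.volume {x : ℝ | ∃ f : ℕ → ℕ, (∀ n, 1 ≤ f n) ∧ Monotone f ∧
        m + 2 ≤ f (R + 1) ∧ HasSum (fun n : ℕ => F (n + 1) (f (n + 1))) x}
      ≤ ∑' j : ℕ, ENNReal.ofReal (1 / ((j + m + 1).factorial : ℝ)) := by
  classical
  set P : (Fin R → ℕ) → ℝ := fun q => ∑ i : Fin R, F ((i : ℕ) + 1) (q i) with hPdef
  set L : ℕ → ℝ :=
    fun t => ((R + 1).factorial : ℝ) / (((t : ℝ) + 1) * ((R + t + 2).factorial : ℝ)) with hLdef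
  set C : ℕ × (Fin R → ℕ) → Set ℝ := fun p =>
    if (Monotone p.2 ∧ (∀ i, 1 ≤ p.2 i) ∧ (∀ i, p.2 i ≤ p.1 + m + 2)) then
      Set.Icc (P p.2) (P p.2 + L (p.1 + m))
    else ∅ with hCdef
  -- step 1 : the inclusion
  have hincl : {x : ℝ | ∃ f : ℕ → ℕ, (∀ n, 1 ≤ f n) ∧ Monotone f ∧
      m + 2 ≤ f (R + 1) ∧ HasSum (fun n : ℕ => F (n + 1) (f (n + 1))) x}
      ⊆ ⋃ p, C p := by
    rintro x ⟨f, hf1, hfmono, hfm, hsum⟩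
    set q : Fin R → ℕ := fun i => f ((i : ℕ) + 1) with hq
    set j : ℕ := f (R + 1) - (m + 2) with hj
    have hk : f (R + 1) = j + m + 2 := by omega
    refine Set.mem_iUnion.mpr ⟨(j, q), ?_⟩
    have hadm : Monotone q ∧ (∀ i, 1 ≤ q i) ∧ (∀ i, q i ≤ j + m + 2) := by
      refine ⟨?_, fun i => hf1 _, fun i => ?_⟩
      · intro i i' hii'
        exact hfmono (Nat.add_le_add_right (Fin.le_def.mp hii') 1)
      · rw [← hk]
        exact hfmono (by omega : (i : ℕ) + 1 ≤ R + 1)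
    simp only [hCdef, if_pos hadm]
    have hPq : P q = ∑ i ∈ Finset.range R, F (i + 1) (f (i + 1)) := by
      rw [hPdef]
      exact Fin.sum_univ_eq_sum_range (fun i => F (i + 1) (f (i + 1))) R
    constructor
    · rw [hPq]
      exact sum_le_hasSum (Finset.range R) (fun i _ => F_nonneg _ _) hsum
    · have htail : HasSum (fun n : ℕ => F (n + R + 1) (f (n + R + 1)))
          (x - ∑ i ∈ Finset.range R, F (i + 1) (f (i + 1))) := by
        refine (hasSum_nat_add_iff (f := fun n : ℕ => F (n + 1) (f (n + 1))) R).mpr ?_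
        rw [sub_add_cancel]
        exact hsum
      have htele' : HasSum (fun n : ℕ => F (n + R + 1) (j + m + 2)) (L (j + m)) := by
        simpa [hLdef] using tele R (j + m)
      have hcomp : x - ∑ i ∈ Finset.range R, F (i + 1) (f (i + 1)) ≤ L (j + m) := by
        refine hasSum_le (fun n => ?_) htail htele'
        have : j + m + 2 ≤ f (n + R + 1) := by
          rw [← hk]
          exact hfmono (by omega : R + 1 ≤ n + R + 1)
        exact F_anti _ this
      rw [hPq]
      linarith [hcomp]
  refine le_trans (measure_mono hincl) (le_trans (measure_iUnion_le C) ?_)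
  rw [ENNReal.tsum_prod']
  refine ENNReal.tsum_le_tsum (fun j => ?_)
  -- now fixed j : bound the inner sum over q
  set s0 : Finset ℕ := Finset.Icc 1 (R + j + m + 1) with hs0
  set h : Finset ℕ → ℝ≥0∞ := fun s =>
    if s ∈ Finset.powersetCard R s0 then ENNReal.ofReal (L (j + m)) else 0 with hhdef
  set A : Set (Fin R → ℕ) :=
    {q | Monotone q ∧ (∀ i, 1 ≤ q i) ∧ (∀ i, q i ≤ j + m + 2)} with hA
  have hsupp : Function.support (fun q => MeasureTheory.volume (C (j, q))) ⊆ A := by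
    intro q hq
    by_contra hqA
    apply hq
    have hqA' : ¬(Monotone q ∧ (∀ i, 1 ≤ q i) ∧ (∀ i, q i ≤ j + m + 2)) := hqA
    simp only [hCdef]
    rw [if_neg hqA']
    simp
  have step1 : ∑' q : Fin R → ℕ, MeasureTheory.volume (C (j, q))
      = ∑' q : A, MeasureTheory.volume (C (j, (q : Fin R → ℕ))) :=
    (tsum_subtype_eq_of_support_subset hsupp).symm
  -- the injection
  set e : A → Finset ℕ := fun q => Finset.image (fun i : Fin R => q.1 i + i) Finset.univ with he
  have hstrict : ∀ q : A, StrictMono (fun i : Fin R => q.1 i + (i : ℕ)) := by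
    intro q i i' hii'
    have h1 : q.1 i ≤ q.1 i' := q.2.1 hii'.le
    have h2 : (i : ℕ) < (i' : ℕ) := hii'
    dsimp only
    omega
  have hcard : ∀ q : A, (e q).card = R := by
    intro q
    rw [he]
    rw [Finset.card_image_of_injective _ (hstrict q).injective]
    simp
  have hmem : ∀ q : A, e q ∈ Finset.powersetCard R s0 := by
    intro q
    rw [Finset.mem_powersetCard]
    refine ⟨?_, hcard q⟩
    intro y hy
    rw [he] at hy
    obtain ⟨i, _, rfl⟩ := Finset.mem_image.mp hy
    have h1 := q.2.2.1 i
    have h2 := q.2.2.2 i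
    have h3 : (i : ℕ) < R := i.isLt
    rw [hs0, Finset.mem_Icc]
    omega
  have hinj : Function.Injective e := by
    intro q1 q2 heq
    have hc1 := hcard q1
    have hmem1 : ∀ i, (fun i : Fin R => q1.1 i + (i : ℕ)) i ∈ e q1 := by
      intro i
      rw [he]
      exact Finset.mem_image_of_mem _ (Finset.mem_univ i)
    have hmem2 : ∀ i, (fun i : Fin R => q2.1 i + (i : ℕ)) i ∈ e q1 := by
      intro i
      rw [heq]
      rw [he]
      exact Finset.mem_image_of_mem _ (Finset.mem_univ i)
    have h1 := Finset.orderEmbOfFin_unique hc1 hmem1 (hstrict q1)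
    have h2 := Finset.orderEmbOfFin_unique hc1 hmem2 (hstrict q2)
    have : (fun i : Fin R => q1.1 i + (i : ℕ)) = fun i : Fin R => q2.1 i + (i : ℕ) := by
      rw [h1, h2]
    ext1
    funext i
    have := congrFun this i
    omega
  have hle : ∀ q : A, MeasureTheory.volume (C (j, (q : Fin R → ℕ))) ≤ h (e q) := by
    intro q
    rw [hhdef]
    simp only [if_pos (hmem q)]
    have hq2 : Monotone (q : Fin R → ℕ) ∧ (∀ i, 1 ≤ (q : Fin R → ℕ) i) ∧
        (∀ i, (q : Fin R → ℕ) i ≤ j + m + 2) := q.2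
    have : C (j, (q : Fin R → ℕ)) = Set.Icc (P q.1) (P q.1 + L (j + m)) := by
      simp only [hCdef]
      rw [if_pos hq2]
    rw [this, Real.volume_Icc]
    rw [add_sub_cancel_left]
  have step2 : ∑' q : A, MeasureTheory.volume (C (j, (q : Fin R → ℕ)))
      ≤ ∑' s : Finset ℕ, h s :=
    Summable.tsum_le_tsum_of_inj e hinj (fun _ _ => zero_le) hle ENNReal.summable ENNReal.summable
  have step3 : ∑' s : Finset ℕ, h s
      = ((R + j + m + 1).choose R : ℝ≥0∞) * ENNReal.ofReal (L (j + m)) := by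
    rw [hhdef]
    rw [tsum_eq_sum (s := Finset.powersetCard R s0) (fun b hb => if_neg hb)]
    rw [Finset.sum_congr rfl (fun s hs => if_pos hs)]
    rw [Finset.sum_const]
    rw [Finset.card_powersetCard]
    rw [hs0, Nat.card_Icc]
    rw [show R + j + m + 1 + 1 - 1 = R + j + m + 1 from by omega]
    rw [nsmul_eq_mul]
  have step4 : ((R + j + m + 1).choose R : ℝ≥0∞) * ENNReal.ofReal (L (j + m))
      ≤ ENNReal.ofReal (1 / ((j + m + 1).factorial : ℝ)) := by
    rw [show ((R + j + m + 1).choose R : ℝ≥0∞) = ENNReal.ofReal ((R + j + m + 1).choose R : ℝ)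
      from by rw [ENNReal.ofReal_natCast]]
    rw [← ENNReal.ofReal_mul (by positivity)]
    apply ENNReal.ofReal_le_ofReal
    have := count_bound R (j + m)
    rw [hLdef]
    convert this using 3 <;> push_cast <;> ring_nf
  calc ∑' q : Fin R → ℕ, MeasureTheory.volume (C (j, q))
      = ∑' q : A, MeasureTheory.volume (C (j, (q : Fin R → ℕ))) := step1
    _ ≤ ∑' s : Finset ℕ, h s := step2
    _ = ((R + j + m + 1).choose R : ℝ≥0∞) * ENNReal.ofReal (L (j + m)) := step3
    _ ≤ ENNReal.ofReal (1 / ((j + m + 1).factorial : ℝ)) := step4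


lemma key (f : ℕ → ℕ) (x : ℝ) :
    HasSum (fun n : ℕ =>
        (1 : ℝ) / ((∏ i ∈ Finset.Icc 1 (f (n + 1)), (n + 1 + i) : ℕ) : ℝ)) x
      ↔ HasSum (fun n : ℕ => F (n + 1) (f (n + 1))) x := by
  rw [show (fun n : ℕ =>
      (1 : ℝ) / ((∏ i ∈ Finset.Icc 1 (f (n + 1)), (n + 1 + i) : ℕ) : ℝ))
    = (fun n : ℕ => F (n + 1) (f (n + 1))) from funext (term_eq f)]

end Stmt2Aux

open Stmt2Aux MeasureTheory in
/-- The set of all sums `∑_{n=1}^∞ 1/((n+1)(n+2)⋯(n+f(n)))`, as `f` ranges over all weakly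
increasing sequences of positive integers tending to infinity, has Lebesgue measure zero. -/
theorem stmt2 :
    MeasureTheory.volume
      {x : ℝ | ∃ f : ℕ → ℕ, (∀ n, 1 ≤ f n) ∧ Monotone f ∧ Tendsto f atTop atTop ∧
        HasSum (fun n : ℕ =>
          (1 : ℝ) / ((∏ i ∈ Finset.Icc 1 (f (n + 1)), (n + 1 + i) : ℕ) : ℝ)) x}
      = 0 := by
  set S : Set ℝ :=
    {x : ℝ | ∃ f : ℕ → ℕ, (∀ n, 1 ≤ f n) ∧ Monotone f ∧ Tendsto f atTop atTop ∧
        HasSum (fun n : ℕ =>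
          (1 : ℝ) / ((∏ i ∈ Finset.Icc 1 (f (n + 1)), (n + 1 + i) : ℕ) : ℝ)) x} with hS
  have hmain : ∀ m : ℕ,
      MeasureTheory.volume S ≤ ∑' j : ℕ, ENNReal.ofReal (1 / ((j + m + 1).factorial : ℝ)) := by
    intro m
    set B : ℕ → Set ℝ := fun R => {x | ∃ f : ℕ → ℕ, (∀ n, 1 ≤ f n) ∧ Monotone f ∧
        m + 2 ≤ f (R + 1) ∧ HasSum (fun n : ℕ => F (n + 1) (f (n + 1))) x} with hB
    have hsub : S ⊆ ⋃ R, B R := by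
      rintro x ⟨f, h1, h2, h3, h4⟩
      obtain ⟨N, hN⟩ := Filter.eventually_atTop.mp (Filter.tendsto_atTop.mp h3 (m + 2))
      exact Set.mem_iUnion.mpr ⟨N, f, h1, h2, hN (N + 1) (by omega), (key f x).mp h4⟩
    have hmono : Monotone B := by
      apply monotone_nat_of_le_succ
      rintro R x ⟨f, h1, h2, h3, h4⟩
      exact ⟨f, h1, h2, le_trans h3 (h2 (by omega : R + 1 ≤ R + 1 + 1)), h4⟩
    calc MeasureTheory.volume S ≤ MeasureTheory.volume (⋃ R, B R) := measure_mono hsub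
      _ = ⨆ R, MeasureTheory.volume (B R) := (hmono.directed_le).measure_iUnion
      _ ≤ _ := iSup_le (fun R => B_bound R m)
  set g : ℕ → ℝ≥0∞ := fun t => ENNReal.ofReal (1 / (t.factorial : ℝ)) with hg
  have hsummable : Summable (fun t : ℕ => 1 / (t.factorial : ℝ)) := by
    simpa using Real.summable_pow_div_factorial 1
  have hfin : ∑' t, g t ≠ ⊤ := by
    rw [hg, ← ENNReal.ofReal_tsum_of_nonneg (fun t => by positivity) hsummable]
    exact ENNReal.ofReal_ne_top
  have htail := ENNReal.tendsto_sum_nat_add g hfin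
  have hDfun : Tendsto (fun m : ℕ => ∑' j : ℕ, ENNReal.ofReal (1 / ((j + m + 1).factorial : ℝ)))
      atTop (nhds 0) := by
    have hcomp := htail.comp (Filter.tendsto_add_atTop_nat 1)
    have heq : (fun m : ℕ => ∑' j : ℕ, ENNReal.ofReal (1 / ((j + m + 1).factorial : ℝ)))
        = (fun i : ℕ => ∑' k, g (k + i)) ∘ (fun m => m + 1) := by
      funext m
      simp only [Function.comp_apply, hg]
      exact tsum_congr (fun j => by rw [show j + (m + 1) = j + m + 1 from by omega])
    rw [heq]
    exact hcomp
  have hle0 : MeasureTheory.volume S ≤ 0 :=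
    ge_of_tendsto hDfun (Filter.Eventually.of_forall hmain)
  exact le_antisymm hle0 zero_le
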